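/- (McDiarmid's inequality) Suppose X₁,…,X_N are independent random variables taking values in a set 𝔛 and f: 𝔛^N → ℝ satisfies the bounded-differences condition: changing the i-th coordinate changes f by at most cᵢ. Then for any ε > 0, Pr( E[f(X₁,…,X_N)] − f(X₁,…,X_N) ≥ ε ) ≤ exp( −2ε² / Σᵢ cᵢ² ). -/

import Mathlib

open MeasureTheory ProbabilityTheory
open scoped BigOperators ENNReal

section McDiarmidAux

open Real

lemma hoeffding_log_bound (p : ℝ) (hp0 : 0 ≤ p) (hp1 : p ≤ 1) (h : ℝ) :
    Real.log (1 - p + p * Real.exp h) ≤ h * p + h ^ 2 / 8 := by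
  set D : ℝ → ℝ := fun x => 1 - p + p * Real.exp x with hDdef
  have hD : ∀ x, 0 < D x := by
    intro x
    rcases lt_or_eq_of_le hp1 with h1 | h1
    · have : 0 < 1 - p := by linarith
      have : 0 ≤ p * Real.exp x := mul_nonneg hp0 (exp_pos x).le
      simp only [D]; linarith
    · simp only [D, ← h1]
      have := exp_pos x; nlinarith
  have hDder : ∀ x, HasDerivAt D (p * Real.exp x) x := by
    intro x
    exact ((Real.hasDerivAt_exp x).const_mul p).const_add (1 - p)
  -- ψ is the derivative of φ := fun x => x*p + x^2/8 - log (D x)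
  set ψ : ℝ → ℝ := fun x => p + x / 4 - p * Real.exp x / D x with hψdef
  set φ : ℝ → ℝ := fun x => x * p + x ^ 2 / 8 - Real.log (D x) with hφdef
  have hφder : ∀ x, HasDerivAt φ (ψ x) x := by
    intro x
    have h1 : HasDerivAt (fun x : ℝ => Real.log (D x)) (p * Real.exp x / D x) x :=
      (hDder x).log (hD x).ne'
    have h2 : HasDerivAt (fun x : ℝ => x * p + x ^ 2 / 8) (p + x / 4) x := by
      have := ((hasDerivAt_pow 2 x).div_const 8).const_add 0
      have h3 : HasDerivAt (fun x : ℝ => x * p) p x := by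
        simpa using (hasDerivAt_id x).mul_const p
      have h4 := h3.add ((hasDerivAt_pow 2 x).div_const 8)
      refine h4.congr_deriv ?_
      ring
    exact h2.sub h1
  have hψder : ∀ x, HasDerivAt ψ (1 / 4 - p * Real.exp x * (1 - p) / (D x) ^ 2) x := by
    intro x
    have h1 : HasDerivAt (fun x : ℝ => p * Real.exp x) (p * Real.exp x) x :=
      (Real.hasDerivAt_exp x).const_mul p
    have h2 : HasDerivAt (fun x : ℝ => p * Real.exp x / D x)
        ((p * Real.exp x * D x - p * Real.exp x * (p * Real.exp x)) / (D x) ^ 2) x :=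
      h1.div (hDder x) (hD x).ne'
    have h3 : HasDerivAt (fun x : ℝ => p + x / 4) (1 / 4) x := by
      simpa using ((hasDerivAt_id x).div_const 4).const_add p
    have h4 := h3.sub h2
    refine h4.congr_deriv ?_
    have : D x = 1 - p + p * Real.exp x := rfl
    rw [this]
    ring
  have hψnn : ∀ x, 0 ≤ 1 / 4 - p * Real.exp x * (1 - p) / (D x) ^ 2 := by
    intro x
    have hDx : (0:ℝ) < D x ^ 2 := pow_pos (hD x) 2
    rw [sub_nonneg, div_le_iff₀ hDx]
    have hDeq : D x = 1 - p + p * Real.exp x := rfl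
    rw [hDeq]
    nlinarith [sq_nonneg (1 - p - p * Real.exp x), exp_pos x]
  have hψmono : Monotone ψ := by
    apply monotone_of_deriv_nonneg (fun x => (hψder x).differentiableAt)
    intro x
    rw [(hψder x).deriv]
    exact hψnn x
  have hψ0 : ψ 0 = 0 := by
    simp [hψdef, hDdef]
  have hφ0 : φ 0 = 0 := by
    simp [hφdef, hDdef]
  -- φ is monotone on [0,∞) and antitone on (-∞,0]
  have hφdiff : Differentiable ℝ φ := fun x => (hφder x).differentiableAt
  have hφ' : ∀ x, deriv φ x = ψ x := fun x => (hφder x).deriv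
  have key : ∀ x, 0 ≤ φ x := by
    intro x
    rcases le_total 0 x with hx | hx
    · have hmono : MonotoneOn φ (Set.Ici (0:ℝ)) := by
        apply monotoneOn_of_deriv_nonneg (convex_Ici 0) hφdiff.continuous.continuousOn
          hφdiff.differentiableOn
        intro y hy
        rw [interior_Ici] at hy
        rw [hφ']
        have : ψ 0 ≤ ψ y := hψmono (le_of_lt hy)
        rw [hψ0] at this
        exact this
      have := hmono Set.self_mem_Ici (Set.mem_Ici.2 hx) hx
      rwa [hφ0] at this
    · have hanti : AntitoneOn φ (Set.Iic (0:ℝ)) := by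
        apply antitoneOn_of_deriv_nonpos (convex_Iic 0) hφdiff.continuous.continuousOn
          hφdiff.differentiableOn
        intro y hy
        rw [interior_Iic] at hy
        rw [hφ']
        have : ψ y ≤ ψ 0 := hψmono (le_of_lt hy)
        rwa [hψ0] at this
      have := hanti (Set.mem_Iic.2 hx) Set.self_mem_Iic hx
      rwa [hφ0] at this
  have := key h
  simp only [hφdef] at this
  linarith

lemma integrable_of_abs_le' {α : Type*} [MeasurableSpace α] {μ : Measure α}
    [IsFiniteMeasure μ] {g : α → ℝ} (hg : AEStronglyMeasurable g μ) (M : ℝ)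
    (h : ∀ x, |g x| ≤ M) : Integrable g μ :=
  ⟨hg, HasFiniteIntegral.of_bounded (C := M) (ae_of_all _ fun x => by
    simpa [Real.norm_eq_abs] using h x)⟩

lemma hoeffding_lemma' {Ω : Type*} [MeasurableSpace Ω] (μ : Measure Ω)
    [IsProbabilityMeasure μ] {Y : Ω → ℝ} (hY : Measurable Y) {a b : ℝ}
    (hab : ∀ ω, Y ω ∈ Set.Icc a b) (hmean : ∫ ω, Y ω ∂μ = 0) (t : ℝ) :
    ∫ ω, Real.exp (t * Y ω) ∂μ ≤ Real.exp (t ^ 2 * (b - a) ^ 2 / 8) := by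
  have habs : ∀ ω, |Y ω| ≤ |a| + |b| := fun ω => abs_le.2
    ⟨by have := neg_abs_le a; have := abs_nonneg b; linarith [(hab ω).1],
     by have := le_abs_self b; have := abs_nonneg a; linarith [(hab ω).2]⟩
  have hYint : Integrable Y μ := integrable_of_abs_le' hY.aestronglyMeasurable (|a| + |b|) habs
  have ha0 : a ≤ 0 := by
    have : ∫ ω, Y ω ∂μ ≥ ∫ _, a ∂μ := integral_mono (integrable_const a) hYint (fun ω => (hab ω).1)
    simpa [hmean] using this
  have hb0 : 0 ≤ b := by
    have : ∫ ω, Y ω ∂μ ≤ ∫ _, b ∂μ := integral_mono hYint (integrable_const b) (fun ω => (hab ω).2)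
    simpa [hmean] using this
  rcases eq_or_lt_of_le (ha0.trans hb0) with hab2 | hab2
  · -- a = b hence a = 0 = b and Y = 0
    have ha : a = 0 := le_antisymm ha0 (by rw [hab2]; exact hb0)
    have hb : b = 0 := by rw [← hab2, ha]
    have hY0 : ∀ ω, Y ω = 0 := fun ω => le_antisymm (hb ▸ (hab ω).2) (ha ▸ (hab ω).1)
    simp only [hY0, mul_zero, Real.exp_zero]
    rw [integral_const]; simp
    positivity
  · -- a < b
    have hba : 0 < b - a := sub_pos.2 hab2
    -- pointwise convexity bound
    have hconv : ∀ ω, Real.exp (t * Y ω) ≤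
        ((b - Y ω) * Real.exp (t * a) + (Y ω - a) * Real.exp (t * b)) / (b - a) := by
      intro ω
      rcases hab ω with ⟨h1, h2⟩
      set y := Y ω
      have hl1 : 0 ≤ (b - y) / (b - a) := div_nonneg (by linarith) hba.le
      have hl2 : 0 ≤ (y - a) / (b - a) := div_nonneg (by linarith) hba.le
      have hl3 : (b - y) / (b - a) + (y - a) / (b - a) = 1 := by field_simp; ring
      have := convexOn_exp.2 (Set.mem_univ (t * a)) (Set.mem_univ (t * b)) hl1 hl2 hl3
      have harg : ((b - y) / (b - a)) • (t * a) + ((y - a) / (b - a)) • (t * b) = t * y := by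
        simp only [smul_eq_mul]
        rw [div_mul_eq_mul_div, div_mul_eq_mul_div, ← add_div, div_eq_iff hba.ne']
        ring
      rw [harg] at this
      calc Real.exp (t * y) ≤ ((b - y) / (b - a)) • Real.exp (t * a)
            + ((y - a) / (b - a)) • Real.exp (t * b) := this
        _ = ((b - y) * Real.exp (t * a) + (y - a) * Real.exp (t * b)) / (b - a) := by
            simp [smul_eq_mul]; ring
    -- integrate
    have hrint : Integrable (fun ω =>
        ((b - Y ω) * Real.exp (t * a) + (Y ω - a) * Real.exp (t * b)) / (b - a)) μ := by
      apply Integrable.div_const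
      exact (((integrable_const b).sub hYint).mul_const _).add ((hYint.sub (integrable_const a)).mul_const _)
    have hlint : Integrable (fun ω => Real.exp (t * Y ω)) μ := by
      apply integrable_of_abs_le'
        ((hY.const_mul t).exp.aestronglyMeasurable)
        (Real.exp (|t| * (|a| + |b|)))
      intro ω
      rw [abs_of_pos (exp_pos _), Real.exp_le_exp]
      calc t * Y ω ≤ |t * Y ω| := le_abs_self _
        _ = |t| * |Y ω| := abs_mul t (Y ω)
        _ ≤ |t| * (|a| + |b|) := mul_le_mul_of_nonneg_left (habs ω) (abs_nonneg t)
    have hint_le := integral_mono hlint hrint hconv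
    have hrval : ∫ ω, ((b - Y ω) * Real.exp (t * a) + (Y ω - a) * Real.exp (t * b)) / (b - a) ∂μ
        = (b * Real.exp (t * a) - a * Real.exp (t * b)) / (b - a) := by
      have i1 : Integrable (fun ω => (b - Y ω) * Real.exp (t * a)) μ :=
        ((integrable_const b).sub hYint).mul_const _
      have i2 : Integrable (fun ω => (Y ω - a) * Real.exp (t * b)) μ :=
        (hYint.sub (integrable_const a)).mul_const _
      have e2 : ∫ ω, b - Y ω ∂μ = b := by
        rw [integral_sub (integrable_const b) hYint, hmean, integral_const]; simp
      have e3 : ∫ ω, Y ω - a ∂μ = -a := by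
        rw [integral_sub hYint (integrable_const a), hmean, integral_const]; simp
      rw [integral_div]
      congr 1
      rw [integral_add i1 i2, integral_mul_const, integral_mul_const, e2, e3]
      ring
    -- now the analytic bound
    set p : ℝ := -a / (b - a) with hpdef
    have hp0 : 0 ≤ p := div_nonneg (by linarith) hba.le
    have hp1 : p ≤ 1 := by rw [div_le_one hba]; linarith
    set h : ℝ := t * (b - a) with hhdef
    have hDpos : 0 < 1 - p + p * Real.exp h := by
      rcases lt_or_eq_of_le hp1 with h1 | h1
      · nlinarith [exp_pos h, mul_nonneg hp0 (exp_pos h).le]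
      · rw [← h1]; nlinarith [exp_pos h]
    have hkey : (b * Real.exp (t * a) - a * Real.exp (t * b)) / (b - a)
        = Real.exp (t * a) * (1 - p + p * Real.exp h) := by
      rw [hpdef, hhdef]
      rw [show t * b = t * a + t * (b - a) by ring, Real.exp_add]
      field_simp
      ring
    have hlog := hoeffding_log_bound p hp0 hp1 h
    have hfinal : Real.exp (t * a) * (1 - p + p * Real.exp h)
        ≤ Real.exp (t ^ 2 * (b - a) ^ 2 / 8) := by
      rw [← Real.exp_log hDpos, ← Real.exp_add, Real.exp_le_exp]
      have hhp : h * p = -(t * a) := by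
        rw [hhdef, hpdef]; field_simp
      have h28 : h ^ 2 / 8 = t ^ 2 * (b - a) ^ 2 / 8 := by rw [hhdef]; ring
      linarith [hlog]
    calc ∫ ω, Real.exp (t * Y ω) ∂μ
        ≤ (b * Real.exp (t * a) - a * Real.exp (t * b)) / (b - a) := hint_le.trans_eq hrval
      _ = Real.exp (t * a) * (1 - p + p * Real.exp h) := hkey
      _ ≤ _ := hfinal

lemma bounded_diff_sum' {𝔛 : Type*} {N : ℕ} (f : (Fin N → 𝔛) → ℝ) (c : Fin N → ℝ)
    (hbd : ∀ (i : Fin N) (x : Fin N → 𝔛) (x' : 𝔛), |f x - f (Function.update x i x')| ≤ c i)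
    (x y : Fin N → 𝔛) : |f x - f y| ≤ ∑ i, c i := by
  classical
  have key : ∀ s : Finset (Fin N), |f x - f (s.piecewise y x)| ≤ ∑ i ∈ s, c i := by
    intro s
    induction s using Finset.induction with
    | empty => simp
    | @insert j s hj ih =>
      rw [Finset.piecewise_insert, Finset.sum_insert hj]
      calc |f x - f (Function.update (s.piecewise y x) j (y j))|
          ≤ |f x - f (s.piecewise y x)|
            + |f (s.piecewise y x) - f (Function.update (s.piecewise y x) j (y j))| := by
            have := abs_sub_le (f x) (f (s.piecewise y x))
              (f (Function.update (s.piecewise y x) j (y j)))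
            linarith
        _ ≤ ∑ i ∈ s, c i + c j := add_le_add ih (hbd j _ _)
        _ = c j + ∑ i ∈ s, c i := by ring
  have := key Finset.univ
  rwa [Finset.piecewise_univ] at this

lemma tensor_mgf' {𝔛 : Type*} [MeasurableSpace 𝔛] (N : ℕ) :
    ∀ (ν : Fin N → Measure 𝔛), (∀ i, IsProbabilityMeasure (ν i)) →
    ∀ (f : (Fin N → 𝔛) → ℝ), Measurable f → ∀ (c : Fin N → ℝ),
    (∀ (i : Fin N) (x : Fin N → 𝔛) (x' : 𝔛), |f x - f (Function.update x i x')| ≤ c i) →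
    ∀ t : ℝ,
    ∫ x, Real.exp (t * ((∫ y, f y ∂Measure.pi ν) - f x)) ∂Measure.pi ν
      ≤ Real.exp (t ^ 2 * (∑ i, c i ^ 2) / 8) := by
  induction N with
  | zero =>
    intro ν hprob f hf c hbd t
    haveI : ∀ i, IsProbabilityMeasure (ν i) := hprob
    have hconst : ∀ x : Fin 0 → 𝔛, f x = f default := fun x => by
      congr 1; exact Subsingleton.elim _ _
    have : ∫ y, f y ∂Measure.pi ν = f default := by
      rw [integral_congr_ae (ae_of_all _ hconst), integral_const]; simp
    simp only [this]
    have : ∀ x : Fin 0 → 𝔛, Real.exp (t * (f default - f x)) = 1 := fun x => by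
      rw [hconst x]; simp
    rw [integral_congr_ae (ae_of_all _ this), integral_const]
    simp
  | succ N IH =>
    intro ν hprob f hf c hbd t
    haveI : ∀ i, IsProbabilityMeasure (ν i) := hprob
    haveI : ∀ j : Fin N, IsProbabilityMeasure ((fun j => ν (Fin.succ j)) j) :=
      fun j => hprob _
    set P1 : Measure (Fin (N + 1) → 𝔛) := Measure.pi ν with hP1def
    set P2 : Measure (Fin N → 𝔛) := Measure.pi (fun j => ν (Fin.succ j)) with hP2def
    haveI : IsProbabilityMeasure P1 := Measure.pi.instIsProbabilityMeasure _
    haveI : IsProbabilityMeasure P2 := Measure.pi.instIsProbabilityMeasure _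
    -- 𝔛 is nonempty
    have hX : Nonempty 𝔛 := by
      by_contra hne
      rw [not_nonempty_iff] at hne
      have h1 := (hprob 0).measure_univ
      have h2 : (Set.univ : Set 𝔛) = ∅ := Set.univ_eq_empty_iff.2 hne
      rw [h2, measure_empty] at h1
      exact zero_ne_one h1
    obtain ⟨x₀⟩ := hX
    -- c is nonneg
    have hc : ∀ i, 0 ≤ c i := fun i => by
      have := hbd i (fun _ => x₀) x₀
      rwa [Function.update_eq_self, sub_self, abs_zero] at this
    -- f is bounded
    set M : ℝ := |f (fun _ => x₀)| + ∑ i, c i with hMdef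
    have hfb : ∀ x, |f x| ≤ M := fun x => by
      have h1 := bounded_diff_sum' f c hbd x (fun _ => x₀)
      have h2 := abs_sub_abs_le_abs_sub (f x) (f (fun _ => x₀))
      rw [hMdef]; linarith
    -- the cons map
    have hcons : Measurable (fun q : 𝔛 × (Fin N → 𝔛) => (Fin.cons q.1 q.2 : Fin (N + 1) → 𝔛)) := by
      rw [measurable_pi_iff]
      intro i
      refine Fin.cases ?_ ?_ i
      · simpa using measurable_fst
      · intro j; simp; exact (measurable_pi_apply j).comp measurable_snd
    have hconsx : ∀ x : 𝔛, Measurable (fun y : Fin N → 𝔛 => (Fin.cons x y : Fin (N + 1) → 𝔛)) :=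
      fun x => hcons.comp (measurable_const.prodMk measurable_id)
    -- measure preserving
    have he : ⇑(MeasurableEquiv.piFinSuccAbove (fun _ : Fin (N + 1) => 𝔛) 0).symm
        = fun q : 𝔛 × (Fin N → 𝔛) => (Fin.cons q.1 q.2 : Fin (N + 1) → 𝔛) := by
      funext q
      simp [MeasurableEquiv.piFinSuccAbove_symm_apply, Fin.insertNthEquiv, Fin.insertNth_zero']
    have hemb : MeasurableEmbedding
        (fun q : 𝔛 × (Fin N → 𝔛) => (Fin.cons q.1 q.2 : Fin (N + 1) → 𝔛)) := by
      rw [← he]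
      exact (MeasurableEquiv.piFinSuccAbove (fun _ : Fin (N + 1) => 𝔛) 0).symm.measurableEmbedding
    have hmp : MeasurePreserving
        (fun q : 𝔛 × (Fin N → 𝔛) => (Fin.cons q.1 q.2 : Fin (N + 1) → 𝔛)) ((ν 0).prod P2) P1 := by
      have h1 := (measurePreserving_piFinSuccAbove ν 0).symm
        (MeasurableEquiv.piFinSuccAbove (fun _ : Fin (N + 1) => 𝔛) 0)
      have hms : (Measure.pi fun j => ν ((0 : Fin (N + 1)).succAbove j)) = P2 := by
        rw [hP2def]
        simp only [Fin.succAbove_zero]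
      rw [he, hms] at h1
      exact h1
    -- iterated integral formula
    have hiter : ∀ φ : (Fin (N + 1) → 𝔛) → ℝ, Measurable φ → (∃ C, ∀ x, |φ x| ≤ C) →
        ∫ x, φ x ∂P1 = ∫ x, ∫ y, φ (Fin.cons x y) ∂P2 ∂(ν 0) := by
      rintro φ hφ ⟨C, hC⟩
      rw [← hmp.integral_comp hemb φ]
      exact integral_prod _
        (integrable_of_abs_le' ((hφ.comp hcons).aestronglyMeasurable) C (fun q => hC _))
    -- the conditional mean F
    set F : 𝔛 → ℝ := fun x => ∫ y, f (Fin.cons x y) ∂P2 with hFdef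
    have hg : Measurable (fun q : 𝔛 × (Fin N → 𝔛) => f (Fin.cons q.1 q.2)) := hf.comp hcons
    have hFmeas : Measurable F :=
      hg.stronglyMeasurable.integral_prod_right'.measurable
    have hFb : ∀ x, |F x| ≤ M := by
      intro x
      rw [hFdef]
      calc |∫ y, f (Fin.cons x y) ∂P2| ≤ ∫ y, |f (Fin.cons x y)| ∂P2 := by
            simpa [Real.norm_eq_abs] using
              norm_integral_le_integral_norm (μ := P2) (fun y => f (Fin.cons x y))
        _ ≤ ∫ _, M ∂P2 := integral_mono
            ((integrable_of_abs_le' (hf.comp (hconsx x)).aestronglyMeasurable M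
              (fun y => hfb _)).abs)
            (integrable_const M) (fun y => hfb _)
        _ = M := by rw [integral_const]; simp
    -- oscillation of F bounded by c 0
    have hFosc : ∀ x x', F x - F x' ≤ c 0 := by
      intro x x'
      have hint : ∀ z : 𝔛, Integrable (fun y => f (Fin.cons z y)) P2 := fun z =>
        integrable_of_abs_le' (hf.comp (hconsx z)).aestronglyMeasurable M (fun y => hfb _)
      rw [hFdef]
      simp only
      rw [← integral_sub (hint x) (hint x')]
      calc ∫ y, (f (Fin.cons x y) - f (Fin.cons x' y)) ∂P2
          ≤ ∫ _, c 0 ∂P2 := by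
            apply integral_mono ((hint x).sub (hint x')) (integrable_const _)
            intro y
            simp only [Pi.sub_apply]
            have h1 : (Fin.cons x' y : Fin (N + 1) → 𝔛)
                = Function.update (Fin.cons x y) 0 x' := by
              rw [Fin.update_cons_zero]
            rw [h1]
            exact (le_abs_self _).trans (hbd 0 _ _)
        _ = c 0 := by rw [integral_const]; simp
    -- expectation of f equals expectation of F
    have hEf : ∫ x, f x ∂P1 = ∫ x, F x ∂(ν 0) := hiter f hf ⟨M, hfb⟩
    set Ef : ℝ := ∫ x, f x ∂P1 with hEfdef
    -- bounded differences for the sliced function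
    have hslice : ∀ x : 𝔛, ∀ (j : Fin N) (y : Fin N → 𝔛) (x' : 𝔛),
        |f (Fin.cons x y) - f (Fin.cons x (Function.update y j x'))| ≤ c j.succ := by
      intro x j y x'
      have h1 : (Fin.cons x (Function.update y j x') : Fin (N + 1) → 𝔛)
          = Function.update (Fin.cons x y) j.succ x' := by simp
      rw [h1]
      exact hbd j.succ _ _
    -- inner bound from IH
    have hinner : ∀ x : 𝔛,
        ∫ y, Real.exp (t * (F x - f (Fin.cons x y))) ∂P2
          ≤ Real.exp (t ^ 2 * (∑ j : Fin N, c j.succ ^ 2) / 8) := by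
      intro x
      exact IH (fun j => ν (Fin.succ j)) (fun j => hprob _) (fun y => f (Fin.cons x y))
        (hf.comp (hconsx x)) (fun j => c j.succ) (hslice x) t
    -- main computation
    have hmain : ∫ x, Real.exp (t * (Ef - f x)) ∂P1
        = ∫ x, Real.exp (t * (Ef - F x))
            * ∫ y, Real.exp (t * (F x - f (Fin.cons x y))) ∂P2 ∂(ν 0) := by
      rw [hiter (fun x => Real.exp (t * (Ef - f x)))
        (((hf.const_sub Ef).const_mul t).exp)
        ⟨Real.exp (|t| * (|Ef| + M)), fun x => by
          rw [abs_of_pos (Real.exp_pos _), Real.exp_le_exp]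
          calc t * (Ef - f x) ≤ |t * (Ef - f x)| := le_abs_self _
            _ = |t| * |Ef - f x| := abs_mul _ _
            _ ≤ |t| * (|Ef| + M) := by
                apply mul_le_mul_of_nonneg_left _ (abs_nonneg t)
                exact (abs_sub _ _).trans (add_le_add le_rfl (hfb x))⟩]
      congr 1
      funext x
      rw [← integral_const_mul]
      congr 1
      funext y
      rw [← Real.exp_add]
      congr 1
      ring
    -- inner integral as measurable function of x
    have hGmeas : Measurable (fun q : 𝔛 × (Fin N → 𝔛) =>
        Real.exp (t * (F q.1 - f (Fin.cons q.1 q.2)))) :=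
      (((hFmeas.comp measurable_fst).sub hg).const_mul t).exp
    have hinnermeas : Measurable (fun x : 𝔛 =>
        ∫ y, Real.exp (t * (F x - f (Fin.cons x y))) ∂P2) :=
      hGmeas.stronglyMeasurable.integral_prod_right'.measurable
    have hinnernn : ∀ x : 𝔛, 0 ≤ ∫ y, Real.exp (t * (F x - f (Fin.cons x y))) ∂P2 :=
      fun x => integral_nonneg (fun y => (Real.exp_pos _).le)
    set K : ℝ := Real.exp (t ^ 2 * (∑ j : Fin N, c j.succ ^ 2) / 8) with hKdef
    have hOb : ∀ x : 𝔛, |Real.exp (t * (Ef - F x))| ≤ Real.exp (|t| * (|Ef| + M)) := by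
      intro x
      rw [abs_of_pos (Real.exp_pos _), Real.exp_le_exp]
      calc t * (Ef - F x) ≤ |t * (Ef - F x)| := le_abs_self _
        _ = |t| * |Ef - F x| := abs_mul _ _
        _ ≤ |t| * (|Ef| + M) := mul_le_mul_of_nonneg_left
            ((abs_sub _ _).trans (add_le_add le_rfl (hFb x))) (abs_nonneg t)
    have houter : ∫ x, Real.exp (t * (Ef - F x))
          * ∫ y, Real.exp (t * (F x - f (Fin.cons x y))) ∂P2 ∂(ν 0)
        ≤ ∫ x, Real.exp (t * (Ef - F x)) * K ∂(ν 0) := by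
      apply integral_mono
      · apply integrable_of_abs_le'
          ((((measurable_const.sub hFmeas).const_mul t).exp.mul hinnermeas).aestronglyMeasurable)
          (Real.exp (|t| * (|Ef| + M)) * K)
        intro x
        rw [Pi.mul_apply, abs_mul]
        apply mul_le_mul (hOb x) _ (abs_nonneg _) (Real.exp_pos _).le
        rw [abs_of_nonneg (hinnernn x)]
        exact hinner x
      · exact (integrable_of_abs_le'
          (((measurable_const.sub hFmeas).const_mul t).exp.aestronglyMeasurable)
          (Real.exp (|t| * (|Ef| + M))) hOb).mul_const K
      · intro x
        exact mul_le_mul_of_nonneg_left (hinner x) (Real.exp_pos _).le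
    -- Hoeffding step
    set Y : 𝔛 → ℝ := fun x => Ef - F x with hYdef
    have hYmeas : Measurable Y := measurable_const.sub hFmeas
    have hFint : Integrable F (ν 0) :=
      integrable_of_abs_le' hFmeas.aestronglyMeasurable M hFb
    have hYmean : ∫ x, Y x ∂(ν 0) = 0 := by
      rw [hYdef]
      simp only
      rw [integral_sub (integrable_const Ef) hFint, integral_const, ← hEf, hEfdef]
      simp
    have hrange : (Set.range Y).Nonempty := ⟨Y x₀, ⟨x₀, rfl⟩⟩
    have hbddY : BddBelow (Set.range Y) := by
      refine ⟨-(|Ef| + M), ?_⟩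
      rintro z ⟨x, rfl⟩
      have := abs_sub Ef (F x)
      have := hFb x
      have h3 := neg_abs_le (Ef - F x)
      have h4 := abs_le.1 (le_refl |Ef - F x|)
      simp only [hYdef]
      nlinarith [neg_abs_le Ef, le_abs_self Ef, abs_nonneg Ef]
    set a : ℝ := sInf (Set.range Y) with hadef
    have hYIcc : ∀ x, Y x ∈ Set.Icc a (a + c 0) := by
      intro x
      constructor
      · exact csInf_le hbddY ⟨x, rfl⟩
      · have hlow : ∀ z ∈ Set.range Y, Y x - c 0 ≤ z := by
          rintro z ⟨x', rfl⟩
          have := hFosc x' x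
          simp only [hYdef]
          linarith
        have := le_csInf hrange hlow
        linarith
    have hhoef := hoeffding_lemma' (ν 0) hYmeas hYIcc hYmean t
    have hba : a + c 0 - a = c 0 := by ring
    rw [hba] at hhoef
    -- put it all together
    calc ∫ x, Real.exp (t * (Ef - f x)) ∂P1
        ≤ ∫ x, Real.exp (t * (Ef - F x)) * K ∂(ν 0) := hmain.trans_le houter
      _ = (∫ x, Real.exp (t * Y x) ∂(ν 0)) * K := by rw [integral_mul_const]
      _ ≤ Real.exp (t ^ 2 * c 0 ^ 2 / 8) * K := by
          apply mul_le_mul_of_nonneg_right _ (Real.exp_pos _).le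
          exact hhoef
      _ = Real.exp (t ^ 2 * (∑ i : Fin (N + 1), c i ^ 2) / 8) := by
          rw [hKdef, ← Real.exp_add, Fin.sum_univ_succ]
          congr 1
          ring

end McDiarmidAux

/-- McDiarmid's inequality: if X₁,…,X_N are independent and
f : 𝔛^N → ℝ has the bounded-differences property with constants cᵢ, then
Pr(E[f(X)] − f(X) ≥ ε) ≤ exp(−2ε² / Σᵢ cᵢ²). -/
theorem mcdiarmid_inequality
    {𝔛 Ω : Type*} [MeasurableSpace 𝔛] [MeasurableSpace Ω]
    (μ : Measure Ω) [IsProbabilityMeasure μ]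
    {N : ℕ} (X : Fin N → Ω → 𝔛)
    (hIndep : iIndepFun X μ)
    (hXmeas : ∀ i, Measurable (X i))
    (f : (Fin N → 𝔛) → ℝ) (hf : Measurable f) (c : Fin N → ℝ)
    (hbd : ∀ (i : Fin N) (x : Fin N → 𝔛) (x' : 𝔛),
      |f x - f (Function.update x i x')| ≤ c i)
    (ε : ℝ) (hε : 0 < ε) :
    μ {ω | (∫ ω', f (fun k => X k ω') ∂μ) - f (fun k => X k ω) ≥ ε}
      ≤ ENNReal.ofReal (Real.exp (-2 * ε ^ 2 / ∑ i, c i ^ 2)) := by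
  set S : ℝ := ∑ i, c i ^ 2 with hSdef
  rcases le_or_gt S 0 with hS | hS
  · -- degenerate case: the bound is at least 1
    have h1 : (1 : ℝ) ≤ Real.exp (-2 * ε ^ 2 / S) := by
      rw [← Real.exp_zero, Real.exp_le_exp]
      rcases eq_or_lt_of_le hS with h | h
      · rw [h, div_zero]
      · rw [div_nonneg_iff]
        right
        constructor <;> nlinarith
    calc μ _ ≤ 1 := prob_le_one
      _ = ENNReal.ofReal 1 := by norm_num
      _ ≤ ENNReal.ofReal (Real.exp (-2 * ε ^ 2 / S)) := ENNReal.ofReal_le_ofReal h1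
  · -- main case
    have hN : N ≠ 0 := by
      rintro rfl
      rw [hSdef] at hS
      simp at hS
    haveI : NeZero N := ⟨hN⟩
    -- Ω nonempty, hence 𝔛 nonempty
    have hΩ : Nonempty Ω := by
      by_contra h
      rw [not_nonempty_iff] at h
      have h1 := (inferInstance : IsProbabilityMeasure μ).measure_univ
      have h2 : (Set.univ : Set Ω) = ∅ := Set.univ_eq_empty_iff.2 h
      rw [h2, measure_empty] at h1
      exact zero_ne_one h1
    obtain ⟨ω₀⟩ := hΩ
    have hXne : Nonempty 𝔛 := ⟨X 0 ω₀⟩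
    obtain ⟨x₀⟩ := hXne
    -- c nonneg
    have hc : ∀ i, 0 ≤ c i := fun i => by
      have := hbd i (fun _ => x₀) x₀
      rwa [Function.update_eq_self, sub_self, abs_zero] at this
    -- boundedness of f
    set M : ℝ := |f (fun _ => x₀)| + ∑ i, c i with hMdef
    have hfb : ∀ x, |f x| ≤ M := fun x => by
      have h1 := bounded_diff_sum' f c hbd x (fun _ => x₀)
      have h2 := abs_sub_abs_le_abs_sub (f x) (f (fun _ => x₀))
      rw [hMdef]; linarith
    -- the law of the vector is the product of the laws
    have hXvec : Measurable (fun ω k => X k ω : Ω → Fin N → 𝔛) :=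
      measurable_pi_iff.2 hXmeas
    haveI : ∀ i, IsProbabilityMeasure (μ.map (X i)) :=
      fun i => Measure.isProbabilityMeasure_map (hXmeas i).aemeasurable
    have hlaw : Measure.pi (fun i => μ.map (X i)) = μ.map (fun ω k => X k ω) := by
      apply Measure.pi_eq
      intro s hs
      rw [Measure.map_apply hXvec (MeasurableSet.univ_pi hs)]
      have hpre : (fun ω k => X k ω) ⁻¹' Set.pi Set.univ s = ⋂ i ∈ Finset.univ, X i ⁻¹' s i := by
        ext ω
        simp [Set.mem_pi]
      rw [hpre, hIndep.measure_inter_preimage_eq_mul Finset.univ (fun i _ => hs i)]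
      exact Finset.prod_congr rfl fun i _ =>
        (Measure.map_apply (hXmeas i) (hs i)).symm
    set P : Measure (Fin N → 𝔛) := Measure.pi (fun i => μ.map (X i)) with hPdef
    haveI : IsProbabilityMeasure P := Measure.pi.instIsProbabilityMeasure _
    -- rewrite the expectation
    have hEeq : ∫ ω', f (fun k => X k ω') ∂μ = ∫ x, f x ∂P := by
      rw [hlaw, integral_map hXvec.aemeasurable hf.aestronglyMeasurable]
    set Ef : ℝ := ∫ x, f x ∂P with hEfdef
    -- Chernoff
    set t : ℝ := 4 * ε / S with htdef
    have ht : 0 ≤ t := le_of_lt (by positivity)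
    set g : Ω → ℝ := fun ω => Ef - f (fun k => X k ω) with hgdef
    have hgmeas : Measurable g := measurable_const.sub (hf.comp hXvec)
    have hgb : ∀ ω, |Real.exp (t * g ω)| ≤ Real.exp (|t| * (|Ef| + M)) := by
      intro ω
      rw [abs_of_pos (Real.exp_pos _), Real.exp_le_exp]
      calc t * g ω ≤ |t * g ω| := le_abs_self _
        _ = |t| * |g ω| := abs_mul _ _
        _ ≤ |t| * (|Ef| + M) := mul_le_mul_of_nonneg_left
            ((abs_sub _ _).trans (add_le_add le_rfl (hfb _))) (abs_nonneg t)
    have hgint : Integrable (fun ω => Real.exp (t * g ω)) μ :=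
      integrable_of_abs_le' ((hgmeas.const_mul t).exp.aestronglyMeasurable) _ hgb
    have hchern := measure_ge_le_exp_mul_mgf (X := g) (μ := μ) (t := t) ε ht hgint
    -- bound the mgf via the tensorization lemma
    have hmgf : mgf g μ t ≤ Real.exp (t ^ 2 * S / 8) := by
      have h1 : mgf g μ t = ∫ x, Real.exp (t * (Ef - f x)) ∂P := by
        rw [hlaw, integral_map (f := fun x => Real.exp (t * (Ef - f x))) hXvec.aemeasurable
            (((measurable_const.sub hf).const_mul t).exp.aestronglyMeasurable)]
        rfl
      rw [h1]
      exact tensor_mgf' N (fun i => μ.map (X i)) (fun i => inferInstance) f hf c hbd t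
    -- final computation
    have hset : {ω | (∫ ω', f (fun k => X k ω') ∂μ) - f (fun k => X k ω) ≥ ε}
        = {ω | ε ≤ g ω} := by
      ext ω
      simp only [Set.mem_setOf_eq, ge_iff_le, hgdef, hEfdef, hEeq]
    rw [hset]
    have hexp : Real.exp (-t * ε) * Real.exp (t ^ 2 * S / 8)
        = Real.exp (-2 * ε ^ 2 / S) := by
      rw [← Real.exp_add]
      congr 1
      rw [htdef]
      field_simp
      ring
    have hrhs : Real.exp (-t * ε) * mgf g μ t ≤ Real.exp (-2 * ε ^ 2 / S) := by
      rw [← hexp]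
      exact mul_le_mul_of_nonneg_left hmgf (Real.exp_pos _).le
    rw [ENNReal.le_ofReal_iff_toReal_le (measure_ne_top μ _) (Real.exp_pos _).le]
    exact hchern.trans hrhs
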